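/- arXiv:2310.15189 — 2 statements merged into one kernel-verified Lean document; each statement's English description precedes it below -/
import Mathlib

section
/- Let M be a positive natural number. Every continuous permutation-invariant function f : (Fin M → ℝ) → ℝ is continuously sum-decomposable through ℝ^M: there exist a continuous function ψ : ℝ → (Fin M → ℝ) and a continuous function ρ : (Fin M → ℝ) → ℝ such that f x = ρ (∑ i, ψ (x i)) for every x : Fin M → ℝ. -/
open MvPolynomial Polynomial Finset in
private lemma esymm_eq_of_psum_eq' (M : ℕ) (c d : Fin M → ℝ)
    (h : ∀ k, 0 < k → k ≤ M → ∑ i, c i ^ k = ∑ i, d i ^ k) :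
    ∀ k, k ≤ M → MvPolynomial.eval c (MvPolynomial.esymm (Fin M) ℝ k)
      = MvPolynomial.eval d (MvPolynomial.esymm (Fin M) ℝ k) := by
  intro k
  induction k using Nat.strong_induction_on with
  | _ k ih =>
    intro hkM
    rcases Nat.eq_zero_or_pos k with rfl | hk
    · simp [MvPolynomial.esymm_zero]
    · have hNc := congrArg (MvPolynomial.eval c) (MvPolynomial.mul_esymm_eq_sum (Fin M) ℝ k)
      have hNd := congrArg (MvPolynomial.eval d) (MvPolynomial.mul_esymm_eq_sum (Fin M) ℝ k)
      simp only [map_mul, map_sum, map_pow, map_natCast, map_neg, map_one] at hNc hNd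
      have hsum : ∑ a ∈ (Finset.HasAntidiagonal.antidiagonal k : Finset (ℕ × ℕ)) with a.1 < k,
          (-1:ℝ) ^ a.1 * MvPolynomial.eval c (MvPolynomial.esymm (Fin M) ℝ a.1)
            * MvPolynomial.eval c (MvPolynomial.psum (Fin M) ℝ a.2)
          = ∑ a ∈ (Finset.HasAntidiagonal.antidiagonal k : Finset (ℕ × ℕ)) with a.1 < k,
          (-1:ℝ) ^ a.1 * MvPolynomial.eval d (MvPolynomial.esymm (Fin M) ℝ a.1)
            * MvPolynomial.eval d (MvPolynomial.psum (Fin M) ℝ a.2) := by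
        refine Finset.sum_congr rfl ?_
        intro a ha
        rw [Finset.mem_filter, Finset.HasAntidiagonal.mem_antidiagonal] at ha
        have h1 : a.1 < k := ha.2
        have h2 : 0 < a.2 := by omega
        have h3 : a.2 ≤ M := by omega
        have hP : MvPolynomial.eval c (MvPolynomial.psum (Fin M) ℝ a.2)
            = MvPolynomial.eval d (MvPolynomial.psum (Fin M) ℝ a.2) := by
          simp only [MvPolynomial.psum, map_sum, map_pow, MvPolynomial.eval_X]
          exact h a.2 h2 h3
        rw [ih a.1 h1 (by omega), hP]
      have : (k : ℝ) * MvPolynomial.eval c (MvPolynomial.esymm (Fin M) ℝ k)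
          = (k : ℝ) * MvPolynomial.eval d (MvPolynomial.esymm (Fin M) ℝ k) := by
        rw [hNc, hNd, hsum]
      exact mul_left_cancel₀ (by exact_mod_cast hk.ne') this

private lemma monotone_eq_of_psum_eq (M : ℕ) (c d : Fin M → ℝ)
    (hc : Monotone c) (hd : Monotone d)
    (h : ∀ k, 0 < k → k ≤ M → ∑ i, c i ^ k = ∑ i, d i ^ k) : c = d := by
  have hcard : Multiset.card (Finset.univ.val.map c) = M := by
    simp [Finset.card_univ]
  have hcard' : Multiset.card (Finset.univ.val.map d) = M := by
    simp [Finset.card_univ]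
  have hesymm : ∀ j, j ≤ M →
      (Finset.univ.val.map c).esymm j = (Finset.univ.val.map d).esymm j := by
    intro j hj
    have h1 := MvPolynomial.aeval_esymm_eq_multiset_esymm (Fin M) ℝ j c
    have h2 := MvPolynomial.aeval_esymm_eq_multiset_esymm (Fin M) ℝ j d
    rw [MvPolynomial.aeval_def, Algebra.algebraMap_self, MvPolynomial.eval₂_id] at h1 h2
    rw [← h1, ← h2]
    exact esymm_eq_of_psum_eq' M c d h j hj
  have hprod : ((Finset.univ.val.map c).map fun t => Polynomial.X - Polynomial.C t).prod
      = ((Finset.univ.val.map d).map fun t => Polynomial.X - Polynomial.C t).prod := by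
    rw [Multiset.prod_X_sub_X_eq_sum_esymm, Multiset.prod_X_sub_X_eq_sum_esymm, hcard, hcard']
    refine Finset.sum_congr rfl ?_
    intro j hj
    rw [Finset.mem_range] at hj
    rw [hesymm j (by omega)]
  have hms : Finset.univ.val.map c = Finset.univ.val.map d := by
    have := congrArg Polynomial.roots hprod
    rwa [Polynomial.roots_multiset_prod_X_sub_C, Polynomial.roots_multiset_prod_X_sub_C] at this
  have hlist : (List.ofFn c : Multiset ℝ) = (List.ofFn d : Multiset ℝ) := by
    rw [List.ofFn_eq_map, List.ofFn_eq_map]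
    simpa [Fin.univ_def, Finset.univ, Fintype.elems] using hms
  exact List.ofFn_injective (List.Perm.eq_of_sortedLE
    hc.sortedLE_ofFn hd.sortedLE_ofFn (Multiset.coe_eq_coe.mp hlist))

/-- Every continuous permutation-invariant function `f : (Fin M → ℝ) → ℝ` is
continuously sum-decomposable through `ℝ^M`. -/
theorem perm_invariant_continuous_sum_decomposable (M : ℕ) (hM : 0 < M)
    (f : (Fin M → ℝ) → ℝ) (hf : Continuous f)
    (hinv : ∀ (σ : Equiv.Perm (Fin M)) (x : Fin M → ℝ), f (x ∘ σ) = f x) :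
    ∃ (ψ : ℝ → (Fin M → ℝ)) (ρ : (Fin M → ℝ) → ℝ),
      Continuous ψ ∧ Continuous ρ ∧ ∀ x : Fin M → ℝ, f x = ρ (∑ i, ψ (x i)) := by
  -- the power map
  set ψ : ℝ → (Fin M → ℝ) := fun t i => t ^ ((i : ℕ) + 1) with hψ
  set Φ : (Fin M → ℝ) → (Fin M → ℝ) := fun x i => ∑ j, x j ^ ((i : ℕ) + 1) with hΦ
  have hψcont : Continuous ψ := continuous_pi fun i => continuous_pow _
  have hΦcont : Continuous Φ :=
    continuous_pi fun i => continuous_finset_sum _ fun j _ => (continuous_apply j).pow _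
  have hsumψ : ∀ x : Fin M → ℝ, (∑ i, ψ (x i)) = Φ x := by
    intro x
    funext i
    simp [ψ, Φ, Finset.sum_apply]
  -- Φ is injective on monotone tuples
  have hΦinj : ∀ c d : Fin M → ℝ, Monotone c → Monotone d → Φ c = Φ d → c = d := by
    intro c d hc hd hcd
    refine monotone_eq_of_psum_eq M c d hc hd ?_
    intro k hk hkM
    have := congrFun hcd ⟨k - 1, by omega⟩
    simpa [Φ, Nat.sub_add_cancel hk] using this
  rcases eq_or_lt_of_le (Nat.succ_le_of_lt hM) with h1 | h2
  · -- M = 1 : trivial case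
    refine ⟨fun t _ => t, f, continuous_pi fun _ => continuous_id, hf, ?_⟩
    intro x
    congr 1
    funext j
    have : (M : ℕ) = 1 := h1.symm
    subst this
    simp [Fin.sum_univ_one]
    have : j = 0 := Subsingleton.elim _ _
    rw [this]
  · -- M ≥ 2
    set C : Set (Fin M → ℝ) := {c | Monotone c} with hC
    have hCclosed : IsClosed C := by
      have : C = ⋂ (i : Fin M) (j : Fin M) (_ : i ≤ j), {c : Fin M → ℝ | c i ≤ c j} := by
        ext c
        simp only [Set.mem_iInter, Set.mem_setOf_eq, hC]
        exact ⟨fun h i j hij => h hij, fun h i j hij => h i j hij⟩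
      rw [this]
      exact isClosed_iInter fun i => isClosed_iInter fun j => isClosed_iInter fun _ =>
        isClosed_le (continuous_apply i) (continuous_apply j)
    have hCne : Nonempty C := ⟨⟨fun _ => 0, monotone_const⟩⟩
    set e : C → (Fin M → ℝ) := fun c => Φ c.val with he
    have hecont : Continuous e := hΦcont.comp continuous_subtype_val
    have heinj : Function.Injective e := by
      intro c d hcd
      exact Subtype.ext (hΦinj c.val d.val c.2 d.2 hcd)
    -- e is proper
    have heproper : IsProperMap e := by
      rw [isProperMap_iff_isCompact_preimage]
      refine ⟨hecont, fun K hK => ?_⟩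
      rw [Topology.IsEmbedding.subtypeVal.isCompact_iff]
      have himg : Subtype.val '' (e ⁻¹' K) = C ∩ Φ ⁻¹' K := by
        ext c
        simp [e, Set.mem_image]
        tauto
      rw [himg]
      rw [Metric.isCompact_iff_isClosed_bounded]
      constructor
      · exact hCclosed.inter (hK.isClosed.preimage hΦcont)
      · obtain ⟨R, hR⟩ := hK.isBounded.exists_norm_le
        rw [isBounded_iff_forall_norm_le]
        refine ⟨Real.sqrt R, ?_⟩
        rintro c ⟨-, hcK⟩
        have hi2 : Φ c ⟨1, h2⟩ = ∑ j, c j ^ 2 := by simp [Φ]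
        have hΦR : Φ c ⟨1, h2⟩ ≤ R :=
          le_trans (le_abs_self _) (le_trans (norm_le_pi_norm (Φ c) _) (hR _ hcK))
        rw [pi_norm_le_iff_of_nonneg (Real.sqrt_nonneg R)]
        intro j
        have hj2 : c j ^ 2 ≤ R := by
          refine le_trans ?_ (hi2 ▸ hΦR)
          exact Finset.single_le_sum (fun i _ => sq_nonneg (c i)) (Finset.mem_univ j)
        calc ‖c j‖ = Real.sqrt (c j ^ 2) := by rw [Real.sqrt_sq_eq_abs]; rfl
        _ ≤ Real.sqrt R := Real.sqrt_le_sqrt hj2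
    have hemb : Topology.IsClosedEmbedding e :=
      .of_continuous_injective_isClosedMap hecont heinj heproper.isClosedMap
    obtain ⟨ρ, hρ⟩ := ContinuousMap.exists_extension' hemb
      ⟨fun c => f c.val, hf.comp continuous_subtype_val⟩
    refine ⟨ψ, ρ, hψcont, ρ.continuous, ?_⟩
    intro x
    rw [hsumψ]
    set σ := Tuple.sort x with hσ
    have hmono : Monotone (x ∘ σ) := Tuple.monotone_sort x
    have hΦeq : Φ x = Φ (x ∘ σ) := by
      funext i
      exact (Equiv.sum_comp σ (fun j => x j ^ ((i : ℕ) + 1))).symm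
    have hval : ρ (Φ (x ∘ σ)) = f (x ∘ σ) := congrFun hρ ⟨x ∘ σ, hmono⟩
    rw [hΦeq, hval, hinv]
end

section
/- Let M be a natural number and let X and Y be multisets of real numbers each of cardinality M. If for every k with 1 ≤ k ≤ M the power sums agree, i.e., ∑_{x ∈ X} x^k = ∑_{y ∈ Y} y^k, then X = Y. -/
open Finset Polynomial

/-- Newton's identity specialized to a multiset of reals. -/
lemma multiset_newton (s : Multiset ℝ) (k : ℕ) :
    (k : ℝ) * s.esymm k = (-1) ^ (k + 1) *
      ∑ a ∈ Finset.HasAntidiagonal.antidiagonal k with a.1 < k,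
        (-1) ^ a.1 * s.esymm a.1 * (s.map (fun x => x ^ a.2)).sum := by
  obtain ⟨l, rfl⟩ : ∃ l : List ℝ, (l : Multiset ℝ) = s := ⟨s.toList, s.coe_toList⟩
  set n := l.length
  let f : Fin n → ℝ := l.get
  have hmap : (Finset.univ.val.map f) = (l : Multiset ℝ) := by
    have : (Finset.univ.val : Multiset (Fin n)) = (List.finRange n : Multiset (Fin n)) := rfl
    rw [this]
    exact congrArg _ (List.map_get_finRange l)
  have hpow : ∀ m : ℕ, (∑ i, f i ^ m) = ((l : Multiset ℝ).map (fun x => x ^ m)).sum := by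
    intro m
    rw [← hmap, Multiset.map_map]
    rfl
  have H := congrArg (MvPolynomial.aeval f) (MvPolynomial.mul_esymm_eq_sum (Fin n) ℝ k)
  simp only [map_mul, map_sum, map_pow, map_neg, map_one, map_natCast,
    MvPolynomial.aeval_esymm_eq_multiset_esymm, MvPolynomial.psum, MvPolynomial.aeval_X,
    hmap, hpow] at H
  exact H

/-- Two size-`M` multisets of reals with the same power sums `∑ x^k` for `1 ≤ k ≤ M`
are equal. -/
theorem multiset_eq_of_powerSums_eq (M : ℕ) (X Y : Multiset ℝ)
    (hX : Multiset.card X = M) (hY : Multiset.card Y = M)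
    (h : ∀ k : ℕ, 1 ≤ k → k ≤ M →
      (X.map (fun x => x ^ k)).sum = (Y.map (fun y => y ^ k)).sum) :
    X = Y := by
  have hesymm : ∀ k : ℕ, k ≤ M → X.esymm k = Y.esymm k := by
    intro k
    induction k using Nat.strong_induction_on with
    | _ k ih =>
      intro hkM
      rcases Nat.eq_zero_or_pos k with rfl | hk
      · simp [Multiset.esymm]
      · have h1 := multiset_newton X k
        have h2 := multiset_newton Y k
        have hsum : ∑ a ∈ Finset.HasAntidiagonal.antidiagonal k with a.1 < k,
            (-1 : ℝ) ^ a.1 * X.esymm a.1 * (X.map (fun x => x ^ a.2)).sum =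
            ∑ a ∈ Finset.HasAntidiagonal.antidiagonal k with a.1 < k,
            (-1 : ℝ) ^ a.1 * Y.esymm a.1 * (Y.map (fun x => x ^ a.2)).sum := by
          refine Finset.sum_congr rfl fun a ha => ?_
          simp only [Finset.mem_filter, Finset.HasAntidiagonal.mem_antidiagonal] at ha
          have h1' : a.1 < k := ha.2
          have h2' : a.2 = k - a.1 := by omega
          have hp : (X.map (fun x => x ^ a.2)).sum = (Y.map (fun x => x ^ a.2)).sum :=
            h a.2 (by omega) (by omega)
          rw [ih a.1 h1' (by omega), hp]
        have : (k : ℝ) * X.esymm k = (k : ℝ) * Y.esymm k := by rw [h1, h2, hsum]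
        exact mul_left_cancel₀ (by exact_mod_cast hk.ne') this
  have hprod : (X.map fun t => Polynomial.X - Polynomial.C t).prod =
      (Y.map fun t => Polynomial.X - Polynomial.C t).prod := by
    rw [Multiset.prod_X_sub_X_eq_sum_esymm, Multiset.prod_X_sub_X_eq_sum_esymm, hX, hY]
    refine Finset.sum_congr rfl fun j hj => ?_
    rw [hesymm j (by simpa using Nat.lt_succ_iff.mp (Finset.mem_range.mp hj))]
  calc X = (X.map fun t => Polynomial.X - Polynomial.C t).prod.roots :=
          (Polynomial.roots_multiset_prod_X_sub_C X).symm
    _ = (Y.map fun t => Polynomial.X - Polynomial.C t).prod.roots := by rw [hprod]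
    _ = Y := Polynomial.roots_multiset_prod_X_sub_C Y
end
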